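/- Let ε_v > 0 and let (x, ŷ, v̂) ∈ ℝ^{d_x} × ℝ^{d_y} × ℝ^{d_y} satisfy ‖∇_v R(x, ŷ, v̂)‖² ≤ ε_v. Then ‖∇̄f(x, ŷ, v̂)‖² ≤ 2C_{g_{xy}}²ε_v/μ² + 4C_{g_{xy}}²C_{f_y}²/μ² + 4C_{f_x}². -/

import Mathlib

noncomputable section

open scoped RealInnerProductSpace
open InnerProductSpace

variable {dx dy : ℕ}

/-- Partial gradient in the first argument. -/
def gX (f : EuclideanSpace ℝ (Fin dx) → EuclideanSpace ℝ (Fin dy) → ℝ)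
    (x : EuclideanSpace ℝ (Fin dx)) (y : EuclideanSpace ℝ (Fin dy)) :
    EuclideanSpace ℝ (Fin dx) :=
  gradient (fun x' => f x' y) x

/-- Partial gradient in the second argument. -/
def gY (f : EuclideanSpace ℝ (Fin dx) → EuclideanSpace ℝ (Fin dy) → ℝ)
    (x : EuclideanSpace ℝ (Fin dx)) (y : EuclideanSpace ℝ (Fin dy)) :
    EuclideanSpace ℝ (Fin dy) :=
  gradient (fun y' => f x y') y

/-- Second derivative `∇_y∇_y g (x,y)` as a linear map `ℝ^{d_y} → ℝ^{d_y}`. -/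
def gYY (g : EuclideanSpace ℝ (Fin dx) → EuclideanSpace ℝ (Fin dy) → ℝ)
    (x : EuclideanSpace ℝ (Fin dx)) (y : EuclideanSpace ℝ (Fin dy)) :
    EuclideanSpace ℝ (Fin dy) →L[ℝ] EuclideanSpace ℝ (Fin dy) :=
  fderiv ℝ (fun y' => gY g x y') y

/-- Mixed second derivative `∇_x∇_y g (x,y)` as a linear map `ℝ^{d_y} → ℝ^{d_x}`. -/
def gXY (g : EuclideanSpace ℝ (Fin dx) → EuclideanSpace ℝ (Fin dy) → ℝ)
    (x : EuclideanSpace ℝ (Fin dx)) (y : EuclideanSpace ℝ (Fin dy)) :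
    EuclideanSpace ℝ (Fin dy) →L[ℝ] EuclideanSpace ℝ (Fin dx) :=
  ContinuousLinearMap.adjoint (fderiv ℝ (fun x' => gY g x' y) x)

/-- Hypergradient estimator `∇̄f(x,y,v) := ∇_x f(x,y) − ∇_x∇_y g(x,y) v`. -/
def barF (f g : EuclideanSpace ℝ (Fin dx) → EuclideanSpace ℝ (Fin dy) → ℝ)
    (x : EuclideanSpace ℝ (Fin dx)) (y v : EuclideanSpace ℝ (Fin dy)) :
    EuclideanSpace ℝ (Fin dx) :=
  gX f x y - gXY g x y v

/-- `∇_v R(x,y,v) = ∇_y∇_y g(x,y) v − ∇_y f(x,y)`. -/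
def gradVR (f g : EuclideanSpace ℝ (Fin dx) → EuclideanSpace ℝ (Fin dy) → ℝ)
    (x : EuclideanSpace ℝ (Fin dx)) (y v : EuclideanSpace ℝ (Fin dy)) :
    EuclideanSpace ℝ (Fin dy) :=
  gYY g x y v - gY f x y

theorem mono_deriv_nonneg {ψ : ℝ → ℝ} {c : ℝ} (hm : Monotone ψ) (hd : HasDerivAt ψ c 0) : 0 ≤ c := by
  have h := hasDerivAt_iff_tendsto_slope.mp hd
  refine le_of_tendsto_of_tendsto tendsto_const_nhds h ?_
  filter_upwards [self_mem_nhdsWithin] with t (ht : t ≠ 0)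
  simp only [slope_def_field, sub_zero]
  rcases lt_or_gt_of_ne ht with h1 | h1
  · have h2 : ψ t - ψ 0 ≤ 0 := by simpa using sub_nonpos.mpr (hm h1.le)
    have := div_nonneg (neg_nonneg.mpr h2) (neg_nonneg.mpr h1.le)
    rw [neg_div_neg_eq] at this; exact this
  · exact div_nonneg (by simpa using hm h1.le) h1.le

theorem grad_half_norm_sq (μ : ℝ) {d : ℕ} (z : EuclideanSpace ℝ (Fin d)) :
    HasGradientAt (fun z => μ / 2 * ‖z‖ ^ 2) (μ • z) z := by
  rw [hasGradientAt_iff_hasFDerivAt]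
  have h := ((hasFDerivAt_id z).inner ℝ (hasFDerivAt_id z)).const_mul (μ/2)
  convert h using 1
  · rfl
  · ext w
    rw [real_inner_self_eq_norm_sq]
    rfl
  · ext w
    rw [toDual_apply_apply, real_inner_smul_left, ContinuousLinearMap.smul_apply,
      ContinuousLinearMap.comp_apply, fderivInnerCLM_apply]
    simp [real_inner_comm z w]
    ring

theorem hessian_lb (g : EuclideanSpace ℝ (Fin dx) → EuclideanSpace ℝ (Fin dy) → ℝ)
    (hg : ContDiff ℝ 2 (Function.uncurry g)) (μ : ℝ)
    (hsc : ∀ x, StrongConvexOn Set.univ μ (fun y => g x y))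
    (x : EuclideanSpace ℝ (Fin dx)) (y v : EuclideanSpace ℝ (Fin dy)) :
    μ * ‖v‖ ^ 2 ≤ ⟪v, gYY g x y v⟫ := by
  have hG : ContDiff ℝ 2 (fun y' : EuclideanSpace ℝ (Fin dy) => g x y') := by
    have : (fun y' : EuclideanSpace ℝ (Fin dy) => g x y') = Function.uncurry g ∘ (fun y' => (x, y')) := rfl
    rw [this]
    exact hg.comp (contDiff_prodMk_right x)
  -- gradient map is C¹
  have hgrad : ContDiff ℝ 1 (fun y' : EuclideanSpace ℝ (Fin dy) => gY g x y') := by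
    have h1 : ContDiff ℝ 1 (fderiv ℝ (fun y' : EuclideanSpace ℝ (Fin dy) => g x y')) :=
      hG.fderiv_right (by norm_num)
    have : (fun y' : EuclideanSpace ℝ (Fin dy) => gY g x y')
        = (toDual ℝ (EuclideanSpace ℝ (Fin dy))).symm ∘ (fderiv ℝ (fun y' : EuclideanSpace ℝ (Fin dy) => g x y')) := rfl
    rw [this]
    exact (toDual ℝ (EuclideanSpace ℝ (Fin dy))).symm.contDiff.comp h1
  have hdiff : ∀ z : EuclideanSpace ℝ (Fin dy), DifferentiableAt ℝ (fun y' : EuclideanSpace ℝ (Fin dy) => gY g x y') z :=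
    fun z => (hgrad.differentiable one_ne_zero).differentiableAt
  -- gradient of G at each point
  have hGgrad : ∀ z : EuclideanSpace ℝ (Fin dy), HasGradientAt (fun y' => g x y') (gY g x z) z :=
    fun z => ((hG.differentiable (by norm_num)).differentiableAt).hasGradientAt
  -- the strongly convex shifted function
  have hconv : ConvexOn ℝ Set.univ (fun z : EuclideanSpace ℝ (Fin dy) => g x z - μ / 2 * ‖z‖ ^ 2) :=
    strongConvexOn_iff_convex.mp (hsc x)
  -- line and its composition
  set L : ℝ → EuclideanSpace ℝ (Fin dy) := fun t => y + t • v with hL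
  have hline : ∀ t : ℝ, HasDerivAt L v t := by
    intro t
    have h := (hasDerivAt_const t y).add ((hasDerivAt_id t).smul_const v)
    simp at h
    exact h
  set ψ : ℝ → ℝ := fun t => ⟪gY g x (L t), v⟫ - μ * ⟪L t, v⟫ with hψ
  set φ : ℝ → ℝ := fun t => g x (L t) - μ / 2 * ‖L t‖ ^ 2 with hφ
  have hφd : ∀ t : ℝ, HasDerivAt φ (ψ t) t := by
    intro t
    have h1 : HasGradientAt (fun z : EuclideanSpace ℝ (Fin dy) => g x z - μ / 2 * ‖z‖ ^ 2)
        (gY g x (L t) - μ • (L t)) (L t) := by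
      rw [hasGradientAt_iff_hasFDerivAt] at *
      have := (hasGradientAt_iff_hasFDerivAt.mp (hGgrad (L t))).sub
        (hasGradientAt_iff_hasFDerivAt.mp (grad_half_norm_sq μ (L t)))
      convert this using 1
      · rfl
      · rfl
      · rfl
      ext w
      simp [inner_sub_left]
    have h2 := (hasGradientAt_iff_hasFDerivAt.mp h1).comp_hasDerivAt t (hline t)
    convert h2 using 1
    · rfl
    · rfl
    · rfl
    rw [toDual_apply_apply, inner_sub_left, real_inner_smul_left]
  have hφconv : ConvexOn ℝ Set.univ φ := by
    have := hconv.comp_affineMap (AffineMap.lineMap (y : EuclideanSpace ℝ (Fin dy)) (y + v))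
    convert this.subset (Set.subset_univ _) (convex_univ) using 1
    · rfl
    · rfl
    · rfl
    · rfl
    funext t
    simp only [hφ, hL, AffineMap.lineMap_apply, Function.comp_apply, vadd_eq_add,
      vsub_eq_sub, add_sub_cancel_left]
    rw [add_comm (t • v) y]
  have hmono : Monotone ψ := by
    have h := hφconv.monotoneOn_deriv (fun t _ => (hφd t).differentiableAt)
    intro s t hst
    have hs := (hφd s).deriv
    have ht := (hφd t).deriv
    rw [← hs, ← ht]
    exact h (Set.mem_univ s) (Set.mem_univ t) hst
  -- derivative of ψ at 0
  have hL0 : L 0 = y := by simp [hL]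
  have hYY : HasFDerivAt (fun y' : EuclideanSpace ℝ (Fin dy) => gY g x y') (gYY g x y) y :=
    (hdiff y).hasFDerivAt
  have hYY' : HasFDerivAt (fun y' => gY g x y') (gYY g x y) (L 0) := by
    rw [hL0]; exact hYY
  have hc1 : HasDerivAt (fun t => gY g x (L t)) (gYY g x y v) 0 := by
    have h := hYY'.comp_hasDerivAt 0 (hline 0)
    exact h
  have hc2 : HasDerivAt (fun t => ⟪gY g x (L t), v⟫) ⟪gYY g x y v, v⟫ 0 := by
    have := hc1.inner ℝ (hasDerivAt_const (0:ℝ) v)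
    simpa using this
  have hc3 : HasDerivAt (fun t => μ * ⟪L t, v⟫) (μ * ⟪v, v⟫) 0 := by
    have := ((hline 0).inner ℝ (hasDerivAt_const (0:ℝ) v)).const_mul μ
    simpa using this
  have hψd : HasDerivAt ψ (⟪gYY g x y v, v⟫ - μ * ⟪v, v⟫) 0 := hc2.sub hc3
  have h0 := mono_deriv_nonneg hmono hψd
  rw [real_inner_self_eq_norm_sq] at h0
  rw [real_inner_comm]
  linarith

/-- bound on the norm of the hypergradient estimator when the
linear system is solved to accuracy `ε_v`. -/
theorem barF_norm_bound
    (f g : EuclideanSpace ℝ (Fin dx) → EuclideanSpace ℝ (Fin dy) → ℝ)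
    (hf : ContDiff ℝ 2 (Function.uncurry f)) (hg : ContDiff ℝ 2 (Function.uncurry g))
    (μ Cfx Cfy Cgxy : ℝ) (hμ : 0 < μ)
    (hsc : ∀ x, StrongConvexOn Set.univ μ (fun y => g x y))
    (hfx_bd : ∀ x y, ‖gX f x y‖ ≤ Cfx)
    (hfy_bd : ∀ x y, ‖gY f x y‖ ≤ Cfy)
    (hgxy_bd : ∀ x y, ‖gXY g x y‖ ≤ Cgxy)
    (εv : ℝ) (hεv : 0 < εv)
    (x : EuclideanSpace ℝ (Fin dx)) (yh vh : EuclideanSpace ℝ (Fin dy))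
    (happrox : ‖gradVR f g x yh vh‖ ^ 2 ≤ εv) :
    ‖barF f g x yh vh‖ ^ 2
      ≤ 2 * Cgxy ^ 2 * εv / μ ^ 2 + 4 * Cgxy ^ 2 * Cfy ^ 2 / μ ^ 2 + 4 * Cfx ^ 2 := by
  have hCgxy : 0 ≤ Cgxy := (norm_nonneg _).trans (hgxy_bd x yh)
  have hCfx : 0 ≤ Cfx := (norm_nonneg _).trans (hfx_bd x yh)
  have hCfy : 0 ≤ Cfy := (norm_nonneg _).trans (hfy_bd x yh)
  set s := Real.sqrt εv with hs
  have hs0 : 0 ≤ s := Real.sqrt_nonneg _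
  have hs2 : s ^ 2 = εv := Real.sq_sqrt hεv.le
  have hgrad_le : ‖gradVR f g x yh vh‖ ≤ s := by
    rw [hs]
    exact (Real.le_sqrt (norm_nonneg _) hεv.le).mpr happrox
  -- ‖gYY vh‖ bound
  have hdecomp : gYY g x yh vh = gradVR f g x yh vh + gY f x yh := by
    simp [gradVR]
  have hgyy_le : ‖gYY g x yh vh‖ ≤ s + Cfy := by
    rw [hdecomp]
    exact (norm_add_le _ _).trans (add_le_add hgrad_le (hfy_bd x yh))
  have hlb := hessian_lb g hg μ hsc x yh vh
  have hinner : ⟪vh, gYY g x yh vh⟫ ≤ ‖vh‖ * ‖gYY g x yh vh‖ := real_inner_le_norm _ _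
  have hvN : μ * ‖vh‖ ≤ s + Cfy := by
    rcases eq_or_lt_of_le (norm_nonneg vh) with h0 | h0
    · rw [← h0]; simpa using add_nonneg hs0 hCfy
    · have h1 : μ * ‖vh‖ * ‖vh‖ ≤ (s + Cfy) * ‖vh‖ := by
        nlinarith [hgyy_le, hinner, hlb]
      exact le_of_mul_le_mul_right h1 h0
  have hB : ‖barF f g x yh vh‖ ≤ Cfx + Cgxy * ‖vh‖ := by
    refine (norm_sub_le _ _).trans (add_le_add (hfx_bd x yh) ?_)
    exact ((gXY g x yh).le_opNorm vh).trans
      (mul_le_mul_of_nonneg_right (hgxy_bd x yh) (norm_nonneg vh))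
  have hμ2 : (0:ℝ) < μ ^ 2 := by positivity
  have hmain : ‖barF f g x yh vh‖ ^ 2
      ≤ (2 * Cgxy ^ 2 * εv + 4 * Cgxy ^ 2 * Cfy ^ 2 + 4 * Cfx ^ 2 * μ ^ 2) / μ ^ 2 := by
    rw [le_div_iff₀ hμ2]
    have h1 := mul_le_mul_of_nonneg_left hB hμ.le
    have h2 := mul_le_mul_of_nonneg_left hvN hCgxy
    have hT : μ * ‖barF f g x yh vh‖ ≤ μ * Cfx + Cgxy * s + Cgxy * Cfy := by nlinarith
    have hsq := mul_self_le_mul_self (by positivity : (0:ℝ) ≤ μ * ‖barF f g x yh vh‖) hT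
    nlinarith [sq_nonneg (Cgxy * s - (Cgxy * Cfy + μ * Cfx)),
      sq_nonneg (Cgxy * Cfy - μ * Cfx), hs2]
  refine hmain.trans (le_of_eq ?_)
  field_simp
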